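/- Let T₁, T₂ be labeled trees with maximum degree d, with n nodes each. In the centroid path decomposition of T₁, for each level i with 0 ≤ i < log₂(2n/d): ∑_{P at level i} √(min(d, |T₁^{r(P)}|)) · Δ_{T₁^{r(P)}, T₂} ≤ √d · Δ_{T₁,T₂}; and for each level log₂(2n/d) + i with i ≥ 0, each centroid path P at that level satisfies |T₁^{r(P)}| ≤ d/2^{i+1}. -/

import Mathlib

open Finset

/-- A finite rooted tree on vertex set `V`, given by its root and parent function. -/
structure RTree (V : Type*) where
  root : V
  parent : V → V
  parent_root : parent root = root
  reaches_root : ∀ v, ∃ n, parent^[n] v = root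

variable {V : Type*} [Fintype V] [DecidableEq V]

open scoped Classical in
/-- The set of children of `u`. -/
noncomputable def RTree.children (T : RTree V) (u : V) : Finset V :=
  Finset.univ.filter fun v => T.parent v = u ∧ v ≠ u

open scoped Classical in
/-- The subtree rooted at `u`: all descendants of `u` (including `u`). -/
noncomputable def RTree.subtree (T : RTree V) (u : V) : Finset V :=
  Finset.univ.filter fun v => ∃ n, T.parent^[n] v = u

/-- `v` is a light node (the root of a non-root centroid path): it is not the tree root
and it is not the heavy child of its parent. -/
def IsLight (T : RTree V) (hvy : V → V) (v : V) : Prop :=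
  v ≠ T.root ∧ v ≠ hvy (T.parent v)

open scoped Classical in
/-- The level of the centroid path rooted at `v`: the number of light nodes on the path
from `v` to the root (inclusive). -/
noncomputable def lightDepth (T : RTree V) (hvy : V → V) (v : V) : ℕ :=
  ((Finset.range (Fintype.card V)).filter fun k => IsLight T hvy (T.parent^[k] v)).card

open scoped Classical in
/-- The roots of the centroid paths: the tree root together with the light nodes. -/
noncomputable def pathRoots (T : RTree V) (hvy : V → V) : Finset V :=
  Finset.univ.filter fun v => v = T.root ∨ IsLight T hvy v

open scoped Classical in
/-- `Δ_{A,B} = ∑_{u ∈ A} ∑_{v ∈ B} δ(u,v)` where `δ(u,v) = 1` iff `u` and `v` are both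
labeled and carry the same label. -/
noncomputable def Delta {V₁ V₂ L : Type*} (lab₁ : V₁ → Option L) (lab₂ : V₂ → Option L)
    (A : Finset V₁) (B : Finset V₂) : ℕ :=
  ∑ u ∈ A, ∑ v ∈ B, if lab₁ u ≠ none ∧ lab₁ u = lab₂ v then 1 else 0

set_option linter.unusedSectionVars false

section Helpers

variable {V : Type*} [Fintype V] [DecidableEq V] (T : RTree V)

open scoped Classical

lemma RTree.mem_subtree {u v : V} : v ∈ T.subtree u ↔ ∃ n, T.parent^[n] v = u := by
  simp [RTree.subtree]

lemma RTree.iterate_parent_root (n : ℕ) : T.parent^[n] T.root = T.root := by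
  induction n with
  | zero => rfl
  | succ n ih => rw [Function.iterate_succ_apply', ih, T.parent_root]

lemma RTree.eq_root_of_iterate {v : V} {m k : ℕ} (h : T.parent^[m] v = T.root) (hk : m ≤ k) :
    T.parent^[k] v = T.root := by
  obtain ⟨j, rfl⟩ := Nat.exists_eq_add_of_le hk
  rw [add_comm, Function.iterate_add_apply, h, T.iterate_parent_root]

lemma RTree.exists_reach_lt_card (v : V) :
    ∃ m < Fintype.card V, T.parent^[m] v = T.root := by
  obtain ⟨n, hn⟩ := T.reaches_root v
  have hP : ∃ m, T.parent^[m] v = T.root := ⟨n, hn⟩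
  refine ⟨Nat.find hP, ?_, Nat.find_spec hP⟩
  set m := Nat.find hP with hm
  by_contra h
  push_neg at h
  have key : ∀ a b : ℕ, a < b → b < m + 1 → T.parent^[a] v = T.parent^[b] v → False := by
    intro a b hlt hb hab
    have h1 : T.parent^[(m - b) + b] v = T.root := by
      rw [Nat.sub_add_cancel (by omega)]; exact Nat.find_spec hP
    rw [Function.iterate_add_apply, ← hab, ← Function.iterate_add_apply] at h1
    exact Nat.find_min hP (by omega) h1
  have hinj : Set.InjOn (fun k => T.parent^[k] v) (Finset.range (m + 1)) := by
    intro a ha b hb hab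
    simp only [Finset.coe_range, Set.mem_Iio] at ha hb
    simp only at hab
    by_contra hne
    rcases Nat.lt_or_ge a b with hlt | hge
    · exact key a b hlt hb hab
    · exact key b a (by omega) ha hab.symm
  have hcard := Finset.card_le_card_of_injOn (fun k => T.parent^[k] v)
    (fun _ _ => Finset.mem_univ _) hinj
  rw [Finset.card_range, Finset.card_univ] at hcard
  omega

lemma RTree.self_mem_subtree (u : V) : u ∈ T.subtree u := (T.mem_subtree).2 ⟨0, rfl⟩

lemma RTree.subtree_subset {u w : V} (h : u ∈ T.subtree w) : T.subtree u ⊆ T.subtree w := by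
  rw [RTree.mem_subtree] at h
  obtain ⟨m, hm⟩ := h
  intro x hx
  rw [RTree.mem_subtree] at hx ⊢
  obtain ⟨k, hk⟩ := hx
  exact ⟨m + k, by rw [Function.iterate_add_apply, hk, hm]⟩

lemma RTree.subtree_nested_or_disjoint (u w : V) :
    u ∈ T.subtree w ∨ w ∈ T.subtree u ∨ Disjoint (T.subtree u) (T.subtree w) := by
  by_cases hdis : Disjoint (T.subtree u) (T.subtree w)
  · exact Or.inr (Or.inr hdis)
  rw [Finset.not_disjoint_iff] at hdis
  obtain ⟨x, hxu, hxw⟩ := hdis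
  rw [RTree.mem_subtree] at hxu hxw
  obtain ⟨a, ha⟩ := hxu
  obtain ⟨b, hb⟩ := hxw
  rcases le_total a b with h | h
  · refine Or.inl ((T.mem_subtree).2 ⟨b - a, ?_⟩)
    rw [← ha, ← Function.iterate_add_apply, Nat.sub_add_cancel h, hb]
  · refine Or.inr (Or.inl ((T.mem_subtree).2 ⟨a - b, ?_⟩))
    rw [← hb, ← Function.iterate_add_apply, Nat.sub_add_cancel h, ha]

lemma RTree.eq_root_of_root_mem {v : V} (h : T.root ∈ T.subtree v) : v = T.root := by
  rw [RTree.mem_subtree] at h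
  obtain ⟨m, hm⟩ := h
  rw [T.iterate_parent_root] at hm
  exact hm.symm

lemma RTree.eq_root_of_periodic {u : V} {m : ℕ} (hm : 1 ≤ m) (h : T.parent^[m] u = u) :
    u = T.root := by
  obtain ⟨t, ht⟩ := T.reaches_root u
  have hiter : ∀ k, T.parent^[k * m] u = u := by
    intro k
    induction k with
    | zero => simp
    | succ k ih => rw [Nat.succ_mul, Function.iterate_add_apply, h, ih]
  have h2 : T.parent^[t * m + t * 0] u = T.root := by
    have : t ≤ t * m := by nlinarith
    simpa using T.eq_root_of_iterate ht this
  rw [Nat.mul_zero, Nat.add_zero, hiter t] at h2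
  exact h2

lemma RTree.parent_ne_of_ne_root {v : V} (h : v ≠ T.root) : T.parent v ≠ v := by
  intro he
  exact h (T.eq_root_of_periodic le_rfl he)

lemma not_isLight_root (hvy : V → V) : ¬ IsLight T hvy T.root := fun h => h.1 rfl

lemma lightDepth_eq_sum (hvy : V → V) (v : V) :
    lightDepth T hvy v =
      ∑ k ∈ Finset.range (Fintype.card V), if IsLight T hvy (T.parent^[k] v) then 1 else 0 := by
  rw [lightDepth, Finset.card_filter]

lemma lightDepth_parent (hvy : V → V) (v : V) :
    lightDepth T hvy v = (if IsLight T hvy v then 1 else 0) + lightDepth T hvy (T.parent v) := by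
  have hN : 1 ≤ Fintype.card V := Fintype.card_pos_iff.2 ⟨T.root⟩
  obtain ⟨N, hNe⟩ : ∃ N, Fintype.card V = N + 1 := ⟨Fintype.card V - 1, by omega⟩
  have hroot : T.parent^[N] (T.parent v) = T.root := by
    obtain ⟨m, hm, hmr⟩ := T.exists_reach_lt_card (T.parent v)
    exact T.eq_root_of_iterate hmr (by omega)
  rw [lightDepth_eq_sum, lightDepth_eq_sum, hNe, Finset.sum_range_succ',
    Finset.sum_range_succ, hroot, if_neg (not_isLight_root T hvy)]
  simp only [Function.iterate_succ_apply, Function.iterate_zero_apply, Nat.add_zero]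
  convert add_comm _ _ <;> split_ifs <;> simp_all

lemma lightDepth_parent_le (hvy : V → V) (v : V) :
    lightDepth T hvy (T.parent v) ≤ lightDepth T hvy v := by
  rw [lightDepth_parent T hvy v]; split <;> omega

lemma lightDepth_iterate_le (hvy : V → V) (v : V) (m : ℕ) :
    lightDepth T hvy (T.parent^[m] v) ≤ lightDepth T hvy v := by
  induction m with
  | zero => exact le_rfl
  | succ m ih =>
    rw [Function.iterate_succ_apply']
    exact (lightDepth_parent_le T hvy _).trans ih

lemma lightDepth_lt (hvy : V → V) {w : V} (hw : IsLight T hvy w) {m : ℕ} (hm : 1 ≤ m) :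
    lightDepth T hvy (T.parent^[m] w) < lightDepth T hvy w := by
  obtain ⟨m, rfl⟩ : ∃ k, m = k + 1 := ⟨m - 1, by omega⟩
  rw [Function.iterate_succ_apply]
  calc lightDepth T hvy (T.parent^[m] (T.parent w)) ≤ lightDepth T hvy (T.parent w) :=
        lightDepth_iterate_le T hvy _ m
    _ < lightDepth T hvy w := by rw [lightDepth_parent T hvy w, if_pos hw]; omega

lemma mem_pathRoots_iff (hvy : V → V) (v : V) :
    v ∈ pathRoots T hvy ↔ v = T.root ∨ IsLight T hvy v := by
  simp [pathRoots]

lemma disjoint_same_level (hvy : V → V) {v w : V} (hv : v ∈ pathRoots T hvy)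
    (hw : w ∈ pathRoots T hvy) (hne : v ≠ w)
    (hld : lightDepth T hvy v = lightDepth T hvy w) :
    Disjoint (T.subtree v) (T.subtree w) := by
  rw [mem_pathRoots_iff] at hv hw
  have key : ∀ a b : V, (a = T.root ∨ IsLight T hvy a) → a ≠ b →
      lightDepth T hvy a = lightDepth T hvy b → a ∉ T.subtree b := by
    intro a b ha hab hldab hmem
    rw [RTree.mem_subtree] at hmem
    obtain ⟨m, hm⟩ := hmem
    have hm1 : 1 ≤ m := by
      rcases Nat.eq_zero_or_pos m with h | h
      · subst h; exact absurd hm hab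
      · exact h
    rcases ha with rfl | hlight
    · rw [T.iterate_parent_root] at hm
      exact hab hm
    · have := lightDepth_lt T hvy hlight hm1
      rw [hm] at this
      omega
  rcases T.subtree_nested_or_disjoint v w with h | h | h
  · exact absurd h (key v w hv hne hld)
  · exact absurd h (key w v hw hne.symm hld.symm)
  · exact h

lemma mem_children_iff (u v : V) : v ∈ T.children u ↔ T.parent v = u ∧ v ≠ u := by
  simp [RTree.children]

lemma disjoint_children_subtrees {u a b : V} (ha : a ∈ T.children u) (hb : b ∈ T.children u)
    (hab : a ≠ b) : Disjoint (T.subtree a) (T.subtree b) := by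
  rw [mem_children_iff] at ha hb
  have key : ∀ x y : V, T.parent x = u → x ≠ u → T.parent y = u → y ≠ u → x ≠ y →
      x ∉ T.subtree y := by
    intro x y hx hxu hy hyu hxy hmem
    rw [RTree.mem_subtree] at hmem
    obtain ⟨m, hm⟩ := hmem
    have hm1 : 1 ≤ m := by
      rcases Nat.eq_zero_or_pos m with h | h
      · subst h; exact absurd hm hxy
      · exact h
    obtain ⟨m, rfl⟩ : ∃ k, m = k + 1 := ⟨m - 1, by omega⟩
    rw [Function.iterate_succ_apply, hx] at hm
    have hper : T.parent^[m + 1] u = u := by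
      rw [Function.iterate_succ_apply', hm, hy]
    have huroot := T.eq_root_of_periodic (by omega) hper
    subst huroot
    rw [T.iterate_parent_root] at hm
    exact hyu hm.symm
  rcases T.subtree_nested_or_disjoint a b with h | h | h
  · exact absurd h (key a b ha.1 ha.2 hb.1 hb.2 hab)
  · exact absurd h (key b a hb.1 hb.2 ha.1 ha.2 hab.symm)
  · exact h

lemma card_subtree_light (hvy : V → V)
    (hhvy_mem : ∀ u, (T.children u).Nonempty → hvy u ∈ T.children u)
    (hhvy_max : ∀ u, ∀ v ∈ T.children u, (T.subtree v).card ≤ (T.subtree (hvy u)).card)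
    {v : V} (hv : IsLight T hvy v) :
    2 * (T.subtree v).card ≤ (T.subtree (T.parent v)).card := by
  set u := T.parent v with hu
  have hvc : v ∈ T.children u := by
    rw [mem_children_iff]
    exact ⟨rfl, fun h => (T.parent_ne_of_ne_root hv.1) (by rw [← hu, h])⟩
  have hh := hhvy_mem u ⟨v, hvc⟩
  have hmax := hhvy_max u v hvc
  have hvh : v ≠ hvy u := hv.2
  have hdisj := disjoint_children_subtrees T hvc hh hvh
  have h1 : T.subtree v ⊆ T.subtree u := T.subtree_subset ((T.mem_subtree).2 ⟨1, rfl⟩)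
  have h2 : T.subtree (hvy u) ⊆ T.subtree u := by
    refine T.subtree_subset ((T.mem_subtree).2 ⟨1, ?_⟩)
    rw [Function.iterate_one, ((mem_children_iff T u (hvy u)).1 hh).1]
  have hunion : (T.subtree v).card + (T.subtree (hvy u)).card ≤ (T.subtree u).card := by
    rw [← Finset.card_union_of_disjoint hdisj]
    exact Finset.card_le_card (Finset.union_subset h1 h2)
  omega

lemma card_subtree_mul_le (hvy : V → V)
    (hhvy_mem : ∀ u, (T.children u).Nonempty → hvy u ∈ T.children u)
    (hhvy_max : ∀ u, ∀ v ∈ T.children u, (T.subtree v).card ≤ (T.subtree (hvy u)).card)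
    (v : V) :
    (T.subtree v).card * 2 ^ (lightDepth T hvy v) ≤ Fintype.card V := by
  obtain ⟨m, -, hm⟩ := T.exists_reach_lt_card v
  induction m generalizing v with
  | zero =>
    simp only [Function.iterate_zero_apply] at hm
    subst hm
    have hld : lightDepth T hvy T.root = 0 := by
      rw [lightDepth_eq_sum]
      refine Finset.sum_eq_zero fun k _ => ?_
      rw [T.iterate_parent_root, if_neg (not_isLight_root T hvy)]
    rw [hld, pow_zero, mul_one]
    exact (Finset.card_le_card (Finset.subset_univ _)).trans_eq (Finset.card_univ)
  | succ m ih =>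
    by_cases hroot : v = T.root
    · subst hroot
      have hld : lightDepth T hvy T.root = 0 := by
        rw [lightDepth_eq_sum]
        refine Finset.sum_eq_zero fun k _ => ?_
        rw [T.iterate_parent_root, if_neg (not_isLight_root T hvy)]
      rw [hld, pow_zero, mul_one]
      exact (Finset.card_le_card (Finset.subset_univ _)).trans_eq (Finset.card_univ)
    · have hu : T.parent^[m] (T.parent v) = T.root := by
        rw [← Function.iterate_succ_apply]; exact hm
      have IH := ih (T.parent v) hu
      have hsub : (T.subtree v).card ≤ (T.subtree (T.parent v)).card :=
        Finset.card_le_card (T.subtree_subset ((T.mem_subtree).2 ⟨1, rfl⟩))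
      rw [lightDepth_parent T hvy v]
      by_cases hl : IsLight T hvy v
      · rw [if_pos hl]
        have := card_subtree_light T hvy hhvy_mem hhvy_max hl
        calc (T.subtree v).card * 2 ^ (1 + lightDepth T hvy (T.parent v))
            = (2 * (T.subtree v).card) * 2 ^ (lightDepth T hvy (T.parent v)) := by ring
          _ ≤ (T.subtree (T.parent v)).card * 2 ^ (lightDepth T hvy (T.parent v)) :=
              Nat.mul_le_mul_right _ this
          _ ≤ Fintype.card V := IH
      · rw [if_neg hl, Nat.zero_add]
        exact (Nat.mul_le_mul_right _ hsub).trans IH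

end Helpers

open scoped Classical in
/-- Let `T₁, T₂` be labeled trees with maximum degree `d ≥ 2` and `n` nodes each.
In the centroid path decomposition of `T₁`:
(1) for each level `i` with `i < log₂(2n/d)`,
`∑_{P at level i} √(min(d,|T₁^{r(P)}|)) · Δ_{T₁^{r(P)},T₂} ≤ √d · Δ_{T₁,T₂}`;
(2) each centroid path `P` at a level `≥ log₂(2n/d) + i` satisfies
`|T₁^{r(P)}| ≤ d/2^{i+1}`. -/
theorem centroid_level_sums_and_sizes
    {V₂ L : Type*} [Fintype V₂] [DecidableEq V₂]
    (T₁ : RTree V) (lab₁ : V → Option L) (lab₂ : V₂ → Option L)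
    (n d : ℕ) (hn : n = Fintype.card V) (hd : 2 ≤ d)
    (hdeg₁ : ∀ u, (T₁.children u).card ≤ d)
    (hvy : V → V)
    (hhvy_mem : ∀ u, (T₁.children u).Nonempty → hvy u ∈ T₁.children u)
    (hhvy_max : ∀ u, ∀ v ∈ T₁.children u, (T₁.subtree v).card ≤ (T₁.subtree (hvy u)).card) :
    (∀ i : ℕ, (i : ℝ) < Real.logb 2 (2 * n / d) →
      ∑ v ∈ (pathRoots T₁ hvy).filter (fun v => lightDepth T₁ hvy v = i),
          Real.sqrt (min d (T₁.subtree v).card) *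
            (Delta lab₁ lab₂ (T₁.subtree v) Finset.univ : ℝ) ≤
        Real.sqrt d * (Delta lab₁ lab₂ Finset.univ Finset.univ : ℝ)) ∧
    (∀ i : ℕ, ∀ v ∈ pathRoots T₁ hvy,
      Real.logb 2 (2 * n / d) + i ≤ (lightDepth T₁ hvy v : ℝ) →
      ((T₁.subtree v).card : ℝ) ≤ (d : ℝ) / 2 ^ (i + 1)) := by
  constructor
  · -- Part 1
    intro i _
    set S := (pathRoots T₁ hvy).filter (fun v => lightDepth T₁ hvy v = i) with hS
    have hdisj : (S : Set V).PairwiseDisjoint T₁.subtree := by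
      intro v hv w hw hne
      simp only [hS, Finset.coe_filter, Set.mem_setOf_eq] at hv hw
      exact disjoint_same_level T₁ hvy hv.1 hw.1 hne (hv.2.trans hw.2.symm)
    have hsum : ∑ v ∈ S, Delta lab₁ lab₂ (T₁.subtree v) Finset.univ ≤
        Delta lab₁ lab₂ Finset.univ Finset.univ := by
      unfold Delta
      rw [← Finset.sum_biUnion hdisj]
      exact Finset.sum_le_sum_of_subset (Finset.subset_univ _)
    have hsqrt : ∀ v ∈ S, Real.sqrt (min d (T₁.subtree v).card) ≤ Real.sqrt (d : ℝ) :=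
      fun v _ => Real.sqrt_le_sqrt (min_le_left _ _)
    calc ∑ v ∈ S, Real.sqrt (min d (T₁.subtree v).card) *
            (Delta lab₁ lab₂ (T₁.subtree v) Finset.univ : ℝ)
        ≤ ∑ v ∈ S, Real.sqrt (d : ℝ) * (Delta lab₁ lab₂ (T₁.subtree v) Finset.univ : ℝ) :=
          Finset.sum_le_sum fun v hv =>
            mul_le_mul_of_nonneg_right (hsqrt v hv) (by positivity)
      _ = Real.sqrt (d : ℝ) * ∑ v ∈ S, (Delta lab₁ lab₂ (T₁.subtree v) Finset.univ : ℝ) := by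
          rw [Finset.mul_sum]
      _ ≤ Real.sqrt (d : ℝ) * (Delta lab₁ lab₂ Finset.univ Finset.univ : ℝ) := by
          refine mul_le_mul_of_nonneg_left ?_ (Real.sqrt_nonneg _)
          exact_mod_cast hsum
  · -- Part 2
    intro i v hv hlog
    have hN : 1 ≤ Fintype.card V := Fintype.card_pos_iff.2 ⟨T₁.root⟩
    have hn1 : 1 ≤ n := hn ▸ hN
    set ℓ := lightDepth T₁ hvy v with hℓ
    have hkey : (T₁.subtree v).card * 2 ^ ℓ ≤ n := by
      rw [hn]; exact card_subtree_mul_le T₁ hvy hhvy_mem hhvy_max v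
    have hd0 : (0:ℝ) < d := by exact_mod_cast (by omega : 0 < d)
    have hn0 : (0:ℝ) < n := by exact_mod_cast hn1
    have hx : (0:ℝ) < 2 * n / d := by positivity
    have hlog2 : Real.logb 2 (2*n/d) ≤ (ℓ:ℝ) - i := by linarith
    have hle : (2*n/d : ℝ) ≤ 2 ^ ((ℓ:ℝ) - i) :=
      (Real.logb_le_iff_le_rpow one_lt_two hx).1 hlog2
    have hrw : (2:ℝ) ^ ((ℓ:ℝ) - (i:ℝ)) = 2^ℓ / 2^i := by
      rw [Real.rpow_sub two_pos, Real.rpow_natCast, Real.rpow_natCast]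
    rw [hrw] at hle
    have h2 : 2 * (n:ℝ) * 2^i ≤ d * 2^ℓ := by
      rw [div_le_div_iff₀ hd0 (by positivity)] at hle
      nlinarith [hle]
    have h1 : ((T₁.subtree v).card : ℝ) * 2^ℓ ≤ n := by exact_mod_cast hkey
    rw [le_div_iff₀ (by positivity : (0:ℝ) < 2 ^ (i+1))]
    have hp : (0:ℝ) < 2^ℓ := by positivity
    have h3 : ((T₁.subtree v).card : ℝ) * 2^(i+1) * 2^ℓ ≤ d * 2^ℓ := by
      have hm := mul_le_mul_of_nonneg_right h1
        (le_of_lt (by positivity : (0:ℝ) < 2*2^i))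
      calc ((T₁.subtree v).card : ℝ) * 2^(i+1) * 2^ℓ
          = ((T₁.subtree v).card : ℝ) * 2^ℓ * (2*2^i) := by rw [pow_succ]; ring
        _ ≤ (n:ℝ) * (2*2^i) := hm
        _ = 2 * n * 2^i := by ring
        _ ≤ d * 2^ℓ := h2
    exact le_of_mul_le_mul_right h3 hp
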